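/- Let M = L × L^‡ with the bilinear form F((f₊,f₋),(g₊,g₋)) = B(f₊,g₊) − B^‡(f₋,g₋), D = {(f, f^‡) | f ∈ L} the diagonal, and W° the standard complementary Lagrangian subalgebra. Let W ⊂ M be a Lagrangian Lie subalgebra with M = D ⊕ W and W commensurable with W°, and let W_± ⊆ L_± denote the images of W under the two projections. Then W_±^⊥ ⊆ W_±, W_+^⊥ × {0} ⊆ W, and {0} × W_−^⊥ ⊆ W; moreover there exists n ∈ ℕ with (L_±)_{≥n} ⊆ W_± ⊆ (L_±)_{≥−n}, i.e., W_± are bounded coisotropic Lie subalgebras of L_±. -/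

import Mathlib

open TensorProduct LaurentPolynomial

noncomputable section

/-- The `ε^k`-eigenspace of the automorphism `σ`. -/
def eigSp {g : Type*} [LieRing g] [LieAlgebra ℂ g]
    (σ : g ≃ₗ⁅ℂ⁆ g) (ε : ℂ) (k : ℤ) : Submodule ℂ g :=
  LinearMap.ker (σ.toLinearEquiv.toLinearMap - ε ^ k • LinearMap.id)

variable (g : Type*) [LieRing g] [LieAlgebra ℂ g]

/-- The full loop algebra `g[z, z⁻¹] = ℂ[z,z⁻¹] ⊗ g`. -/
abbrev LoopAlg := LaurentPolynomial ℂ ⊗[ℂ] g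

/-- The residue pairing on `ℂ[z,z⁻¹]`: `(p, q) ↦` coefficient of `z⁰` in `p·q`. -/
def resPair : LinearMap.BilinForm ℂ (LaurentPolynomial ℂ) :=
  LinearMap.mk₂ ℂ (fun p q => AddMonoidAlgebra.coeff (p * q) 0)
    (fun p p' q => by beta_reduce; rw [add_mul]; exact Finsupp.add_apply _ _ 0)
    (fun c p q => by beta_reduce; rw [smul_mul_assoc]; exact Finsupp.smul_apply c _ 0)
    (fun p q q' => by beta_reduce; rw [mul_add]; exact Finsupp.add_apply _ _ 0)
    (fun c p q => by beta_reduce; rw [mul_smul_comm]; exact Finsupp.smul_apply c _ 0)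

/-- The standard bilinear form `B(a z^k, b z^l) = κ(a,b) δ_{k+l,0}` on the loop algebra. -/
def loopForm : LinearMap.BilinForm ℂ (LoopAlg g) :=
  LinearMap.BilinForm.tmul (resPair) (killingForm ℂ g)

/-- The dagger map `a z^k ↦ a z^{−k}`, an isometric Lie algebra isomorphism
`L(g,σ) → L(g,σ⁻¹)`. -/
def daggerMap : LoopAlg g →ₗ[ℂ] LoopAlg g :=
  TensorProduct.map (LaurentPolynomial.invert (R := ℂ)).toLinearMap LinearMap.id

/-- The bilinear form `F((f₊,f₋),(g₊,g₋)) = B(f₊,g₊) − B(f₋,g₋)` on `L × L^‡`. -/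
def prodForm : LinearMap.BilinForm ℂ (LoopAlg g × LoopAlg g) :=
  ((loopForm g).compl₁₂ (LinearMap.fst ℂ (LoopAlg g) (LoopAlg g))
      (LinearMap.fst ℂ (LoopAlg g) (LoopAlg g))) -
  ((loopForm g).compl₁₂ (LinearMap.snd ℂ (LoopAlg g) (LoopAlg g))
      (LinearMap.snd ℂ (LoopAlg g) (LoopAlg g)))

variable {g}

/-- The degree `k` component `g_k z^k` of the twisted loop algebra `L(g,σ)`. -/
def loopComp (σ : g ≃ₗ⁅ℂ⁆ g) (ε : ℂ) (k : ℤ) : Submodule ℂ (LoopAlg g) :=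
  Submodule.map (TensorProduct.mk ℂ (LaurentPolynomial ℂ) g (T k)) (eigSp σ ε k)

/-- The degree `k` component `g_k^‡ z^k` of the twisted loop algebra `L(g,σ⁻¹)`. -/
def loopCompDag (σ : g ≃ₗ⁅ℂ⁆ g) (ε : ℂ) (k : ℤ) : Submodule ℂ (LoopAlg g) :=
  Submodule.map (TensorProduct.mk ℂ (LaurentPolynomial ℂ) g (T k)) (eigSp σ ε (-k))

/-- The twisted loop algebra `L(g,σ) = ⊕_{k∈ℤ} g_k z^k`. -/
def loopCarrier (σ : g ≃ₗ⁅ℂ⁆ g) (ε : ℂ) : Submodule ℂ (LoopAlg g) :=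
  ⨆ k : ℤ, loopComp σ ε k

/-- The twisted loop algebra `L^‡ = L(g,σ⁻¹) = ⊕_{k∈ℤ} g_k^‡ z^k`. -/
def loopDagCarrier (σ : g ≃ₗ⁅ℂ⁆ g) (ε : ℂ) : Submodule ℂ (LoopAlg g) :=
  ⨆ k : ℤ, loopCompDag σ ε k

/-- `L_{≥ n} = t^n·L_{≥0}` inside `L(g,σ)`. -/
def loopGe (σ : g ≃ₗ⁅ℂ⁆ g) (ε : ℂ) (m : ℕ) (n : ℤ) : Submodule ℂ (LoopAlg g) :=
  ⨆ j : ℤ, ⨆ _ : n * (m : ℤ) ≤ j, loopComp σ ε j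

/-- `L^‡_{≥ n}` inside `L(g,σ⁻¹)`. -/
def loopGeDag (σ : g ≃ₗ⁅ℂ⁆ g) (ε : ℂ) (m : ℕ) (n : ℤ) : Submodule ℂ (LoopAlg g) :=
  ⨆ j : ℤ, ⨆ _ : n * (m : ℤ) ≤ j, loopCompDag σ ε j

/-- The diagonal `D = {(f, f^‡) | f ∈ L}` in `L × L^‡`. -/
def loopDiag (σ : g ≃ₗ⁅ℂ⁆ g) (ε : ℂ) : Submodule ℂ (LoopAlg g × LoopAlg g) :=
  Submodule.map (LinearMap.prod LinearMap.id (daggerMap g)) (loopCarrier σ ε)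

/-- The standard complementary Lagrangian subalgebra `W°`, attached to a triangular
decomposition `g₀ = g₀⁺ ⊕ h ⊕ g₀⁻`:
`W° = {(f₊,f₋) ∈ B₊ × B₋ | π₊(f₊) + π₋(f₋) = 0}`. -/
def stdW (σ : g ≃ₗ⁅ℂ⁆ g) (ε : ℂ) (gp hC gm : Submodule ℂ g) :
    Submodule ℂ (LoopAlg g × LoopAlg g) :=
  ((Submodule.map (TensorProduct.mk ℂ (LaurentPolynomial ℂ) g (T 0)) gp ⊔
      (⨆ j : ℤ, ⨆ _ : 1 ≤ j, loopComp σ ε j)).prod ⊥) ⊔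
  (Submodule.prod ⊥ (Submodule.map (TensorProduct.mk ℂ (LaurentPolynomial ℂ) g (T 0)) gm ⊔
      (⨆ j : ℤ, ⨆ _ : 1 ≤ j, loopCompDag σ ε j))) ⊔
  Submodule.map
    (LinearMap.prod (TensorProduct.mk ℂ (LaurentPolynomial ℂ) g (T 0))
      (-(TensorProduct.mk ℂ (LaurentPolynomial ℂ) g (T 0)))) hC

/-- Commensurability of two subspaces: `(W' + W'')/(W' ∩ W'')` is finite dimensional. -/
def Commens {k V : Type*} [Field k] [AddCommGroup V] [Module k V]
    (W' W'' : Submodule k V) : Prop :=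
  FiniteDimensional k (↥(W' ⊔ W'') ⧸ Submodule.comap (W' ⊔ W'').subtype (W' ⊓ W''))

end

section AuxLemmas

open Submodule

variable {g : Type*} [LieRing g] [LieAlgebra ℂ g]

/-- The graded piece sup with a lower threshold, generic in the family of subspaces. -/
noncomputable def gradedGe (A : ℤ → Submodule ℂ g) (c : ℤ) : Submodule ℂ (LoopAlg g) :=
  ⨆ j : ℤ, ⨆ _ : c ≤ j, Submodule.map (TensorProduct.mk ℂ (LaurentPolynomial ℂ) g (T j)) (A j)

/-- The full graded sup. -/
noncomputable def gradedSup (A : ℤ → Submodule ℂ g) : Submodule ℂ (LoopAlg g) :=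
  ⨆ j : ℤ, Submodule.map (TensorProduct.mk ℂ (LaurentPolynomial ℂ) g (T j)) (A j)

lemma loopGe_eq (σ : g ≃ₗ⁅ℂ⁆ g) (ε : ℂ) (m : ℕ) (n : ℤ) :
    loopGe σ ε m n = gradedGe (fun j => eigSp σ ε j) (n * m) := rfl

lemma loopGeDag_eq (σ : g ≃ₗ⁅ℂ⁆ g) (ε : ℂ) (m : ℕ) (n : ℤ) :
    loopGeDag σ ε m n = gradedGe (fun j => eigSp σ ε (-j)) (n * m) := rfl

lemma loopCarrier_eq (σ : g ≃ₗ⁅ℂ⁆ g) (ε : ℂ) :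
    loopCarrier σ ε = gradedSup (fun j => eigSp σ ε j) := rfl

lemma loopDagCarrier_eq (σ : g ≃ₗ⁅ℂ⁆ g) (ε : ℂ) :
    loopDagCarrier σ ε = gradedSup (fun j => eigSp σ ε (-j)) := rfl

lemma gradedGe_mono (A : ℤ → Submodule ℂ g) {c c' : ℤ} (h : c ≤ c') :
    gradedGe A c' ≤ gradedGe A c := by
  refine iSup_mono fun j => iSup_le fun hj => ?_
  exact le_iSup_of_le (h.trans hj) le_rfl

lemma gradedGe_le_gradedSup (A : ℤ → Submodule ℂ g) (c : ℤ) :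
    gradedGe A c ≤ gradedSup A := by
  refine iSup_mono fun j => iSup_le fun _ => le_rfl

lemma map_le_gradedGe (A : ℤ → Submodule ℂ g) {c j : ℤ} (h : c ≤ j) :
    Submodule.map (TensorProduct.mk ℂ (LaurentPolynomial ℂ) g (T j)) (A j) ≤ gradedGe A c :=
  le_iSup_of_le j (le_iSup_of_le h le_rfl)

lemma loopForm_tmul (p q : LaurentPolynomial ℂ) (a b : g) :
    loopForm g (p ⊗ₜ a) (q ⊗ₜ b) = killingForm ℂ g a b * resPair p q := by
  simp [loopForm, smul_eq_mul]

lemma resPair_T {j k : ℤ} (h : j + k ≠ 0) : resPair (T j) (T k : LaurentPolynomial ℂ) = 0 := by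
  have h1 : resPair (T j) (T k : LaurentPolynomial ℂ)
      = (T j * T k : LaurentPolynomial ℂ).coeff 0 := rfl
  rw [h1, ← T_add, T_apply, if_neg h]

lemma loopForm_comm [Module.Finite ℂ g] (x y : LoopAlg g) :
    loopForm g x y = loopForm g y x := by
  have hres : LinearMap.IsSymm (resPair : LinearMap.BilinForm ℂ (LaurentPolynomial ℂ)) := by
    refine ⟨fun p q => ?_⟩
    show AddMonoidAlgebra.coeff (p * q : LaurentPolynomial ℂ) 0 = AddMonoidAlgebra.coeff (q * p : LaurentPolynomial ℂ) 0
    rw [mul_comm]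
  have hk : LinearMap.IsSymm (killingForm ℂ g) := LieModule.traceForm_isSymm ℂ g g
  have := (hres.tmul hk).eq x y
  simpa [loopForm] using this

lemma graded_ortho (A A' : ℤ → Submodule ℂ g) {a b : ℤ} (hab : 0 < a + b)
    {x y : LoopAlg g} (hx : x ∈ gradedGe A a) (hy : y ∈ gradedGe A' b) :
    loopForm g x y = 0 := by
  refine Submodule.iSup_induction
    (motive := fun x => ∀ y : LoopAlg g, y ∈ gradedGe A' b → loopForm g x y = 0) _ hx ?_ ?_ ?_ y hy
  · intro j x hx' y hy
    by_cases hj : a ≤ j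
    · rw [iSup_pos hj] at hx'
      obtain ⟨u, -, rfl⟩ := hx'
      refine Submodule.iSup_induction
        (motive := fun y => loopForm g ((TensorProduct.mk ℂ (LaurentPolynomial ℂ) g (T j)) u) y = 0)
        _ hy ?_ ?_ ?_
      · intro k y hy'
        by_cases hk : b ≤ k
        · rw [iSup_pos hk] at hy'
          obtain ⟨v, -, rfl⟩ := hy'
          show loopForm g (T j ⊗ₜ u) (T k ⊗ₜ v) = 0
          rw [loopForm_tmul, resPair_T (by omega), mul_zero]
        · rw [iSup_neg hk] at hy'
          simp [show y = 0 from hy']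
      · simp
      · intro y z hy hz
        rw [map_add, hy, hz, add_zero]
    · rw [iSup_neg hj] at hx'
      simp [show x = 0 from hx']
  · intro y hy
    simp
  · intro x z hx' hz' y hy
    rw [map_add, LinearMap.add_apply, hx' y hy, hz' y hy, add_zero]

lemma mem_gradedGe_of_mem (A : ℤ → Submodule ℂ g) {x : LoopAlg g} (hx : x ∈ gradedSup A) :
    ∃ N : ℕ, x ∈ gradedGe A (-(N : ℤ)) := by
  rw [gradedSup, Submodule.mem_iSup_iff_exists_finset] at hx
  obtain ⟨s, hs⟩ := hx
  refine ⟨s.sup fun j => (-j).toNat, ?_⟩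
  have hle : (⨆ j ∈ s, Submodule.map (TensorProduct.mk ℂ (LaurentPolynomial ℂ) g (T j)) (A j))
      ≤ gradedGe A (-(s.sup fun j => (-j).toNat : ℕ) : ℤ) := by
    refine iSup₂_le fun j hj => ?_
    refine map_le_gradedGe A ?_
    have h2 : (-j).toNat ≤ (s.sup fun j => (-j).toNat) :=
      Finset.le_sup (f := fun j : ℤ => (-j).toNat) hj
    omega
  exact hle hs

lemma finset_bound (A : ℤ → Submodule ℂ g) (t : Finset (LoopAlg g))
    (ht : ∀ v ∈ t, v ∈ gradedSup A) :
    ∃ N : ℕ, ∀ v ∈ t, v ∈ gradedGe A (-(N : ℤ)) := by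
  classical
  induction t using Finset.induction_on with
  | empty => exact ⟨0, by simp⟩
  | @insert a s ha ih =>
    obtain ⟨N₁, hN₁⟩ := ih fun v hv => ht v (Finset.mem_insert_of_mem hv)
    obtain ⟨N₂, hN₂⟩ := mem_gradedGe_of_mem A (ht a (Finset.mem_insert_self a s))
    refine ⟨max N₁ N₂, fun v hv => ?_⟩
    rcases Finset.mem_insert.mp hv with rfl | hv
    · exact gradedGe_mono A (by omega) hN₂
    · exact gradedGe_mono A (by omega) (hN₁ v hv)

lemma le_sup_span_of_commens {k V : Type*} [Field k] [AddCommGroup V] [Module k V]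
    {W W' : Submodule k V} (h : Commens W W') :
    ∃ t : Finset V, (∀ v ∈ t, v ∈ W ⊔ W') ∧ W ≤ W' ⊔ Submodule.span k (t : Set V) := by
  classical
  set M0 := W ⊔ W' with hM0
  set K : Submodule k ↥M0 := Submodule.comap M0.subtype (W ⊓ W') with hK
  haveI : Module.Finite k (↥M0 ⧸ K) := h
  obtain ⟨s, hs⟩ := Module.finite_def.mp ‹Module.Finite k (↥M0 ⧸ K)›
  set f : (↥M0 ⧸ K) → ↥M0 := Function.surjInv (Submodule.Quotient.mk_surjective K) with hf
  set t0 : Finset ↥M0 := s.image f with ht0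
  have hmap : Submodule.map K.mkQ (Submodule.span k (t0 : Set ↥M0)) = ⊤ := by
    rw [Submodule.map_span]
    have : K.mkQ '' (t0 : Set ↥M0) = (s : Set (↥M0 ⧸ K)) := by
      ext q
      simp only [ht0, Finset.coe_image, Set.image_image]
      constructor
      · rintro ⟨q', hq', rfl⟩
        simpa [hf, Submodule.mkQ_apply, Function.surjInv_eq] using hq'
      · intro hq
        exact ⟨q, hq, by simp [hf, Submodule.mkQ_apply, Function.surjInv_eq]⟩
    rw [this, hs]
  rw [Submodule.map_mkQ_eq_top] at hmap
  refine ⟨t0.image (fun v : ↥M0 => (v : V)), ?_, ?_⟩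
  · intro v hv
    simp only [Finset.mem_image] at hv
    obtain ⟨v', -, rfl⟩ := hv
    exact v'.2
  · have h1 : M0 = Submodule.map M0.subtype (K ⊔ Submodule.span k (t0 : Set ↥M0)) := by
      rw [hmap, Submodule.map_subtype_top]
    have h2 : Submodule.map M0.subtype K = W ⊓ W' := by
      rw [hK, Submodule.map_comap_subtype, inf_eq_right.mpr]
      exact inf_le_left.trans le_sup_left
    intro x hx
    have hx0 : x ∈ M0 := le_sup_left (a := W) (b := W') hx
    rw [h1, Submodule.map_sup, h2, Submodule.map_span] at hx0
    have himg : M0.subtype '' (t0 : Set ↥M0) = ((t0.image fun v : ↥M0 => (v : V)) : Finset V) := by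
      simp [Finset.coe_image]
    rw [himg] at hx0
    have hle : (W ⊓ W') ⊔ Submodule.span k ((t0.image fun v : ↥M0 => (v : V)) : Set V)
        ≤ W' ⊔ Submodule.span k ((t0.image fun v : ↥M0 => (v : V)) : Set V) :=
      sup_le (inf_le_right.trans le_sup_left) le_sup_right
    exact hle hx0

end AuxLemmas
set_option maxHeartbeats 2000000 in
/-- Let `M = L × L^‡ = D ⊕ W` be a Manin triple with `W` commensurable with
the standard Lagrangian complement `W°`, and let `W_±` be the images of `W` under the two
projections.  Then `W_±` are Lie subalgebras with `W_±^⊥ ⊆ W_±`, one has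
`W_+^⊥ × {0} ⊆ W` and `{0} × W_−^⊥ ⊆ W`, and there is `n ∈ ℕ` with
`(L_±)_{≥n} ⊆ W_± ⊆ (L_±)_{≥−n}`; i.e. `W_±` are bounded coisotropic Lie subalgebras. -/
theorem maninTriple_projections_bounded_coisotropic
    {g : Type*} [LieRing g] [LieAlgebra ℂ g]
    [Module.Finite ℂ g] [LieAlgebra.IsSimple ℂ g]
    (m : ℕ) (hm : 0 < m)
    (σ : g ≃ₗ⁅ℂ⁆ g) (hσ : ∀ x : g, (⇑σ)^[m] x = x)
    (ε : ℂ) (hε : IsPrimitiveRoot ε m)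
    -- a triangular decomposition g₀ = g₀⁺ ⊕ h ⊕ g₀⁻
    (gp hC gm : Submodule ℂ g)
    (hdec : gp ⊔ hC ⊔ gm = eigSp σ ε 0)
    (hd1 : Disjoint gp (hC ⊔ gm)) (hd2 : Disjoint hC gm)
    -- the Manin triple M = D ∔ W
    (W : Submodule ℂ (LoopAlg g × LoopAlg g))
    (hWsub : W ≤ (loopCarrier σ ε).prod (loopDagCarrier σ ε))
    (hWlie : ∀ x ∈ W, ∀ y ∈ W, (⁅Prod.fst x, Prod.fst y⁆, ⁅Prod.snd x, Prod.snd y⁆) ∈ W)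
    (hWiso : ∀ x ∈ W, ∀ y ∈ W, prodForm g x y = 0)
    (hWcoiso : ∀ x ∈ (loopCarrier σ ε).prod (loopDagCarrier σ ε),
      (∀ y ∈ W, prodForm g x y = 0) → x ∈ W)
    (hdisj : Disjoint (loopDiag σ ε) W)
    (hsup : loopDiag σ ε ⊔ W = (loopCarrier σ ε).prod (loopDagCarrier σ ε))
    (hcomm : Commens W (stdW σ ε gp hC gm)) :
    (∀ x ∈ Submodule.map (LinearMap.fst ℂ _ _) W, ∀ y ∈ Submodule.map (LinearMap.fst ℂ _ _) W,
        ⁅x, y⁆ ∈ Submodule.map (LinearMap.fst ℂ _ _) W) ∧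
    (∀ x ∈ Submodule.map (LinearMap.snd ℂ _ _) W, ∀ y ∈ Submodule.map (LinearMap.snd ℂ _ _) W,
        ⁅x, y⁆ ∈ Submodule.map (LinearMap.snd ℂ _ _) W) ∧
    (loopCarrier σ ε ⊓ (loopForm g).orthogonal (Submodule.map (LinearMap.fst ℂ _ _) W)
        ≤ Submodule.map (LinearMap.fst ℂ _ _) W) ∧
    (loopDagCarrier σ ε ⊓ (loopForm g).orthogonal (Submodule.map (LinearMap.snd ℂ _ _) W)
        ≤ Submodule.map (LinearMap.snd ℂ _ _) W) ∧
    ((loopCarrier σ ε ⊓ (loopForm g).orthogonal (Submodule.map (LinearMap.fst ℂ _ _) W)).prod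
        ⊥ ≤ W) ∧
    (Submodule.prod ⊥
        (loopDagCarrier σ ε ⊓ (loopForm g).orthogonal (Submodule.map (LinearMap.snd ℂ _ _) W))
        ≤ W) ∧
    (∃ n : ℕ,
      loopGe σ ε m (n : ℤ) ≤ Submodule.map (LinearMap.fst ℂ _ _) W ∧
      Submodule.map (LinearMap.fst ℂ _ _) W ≤ loopGe σ ε m (-(n : ℤ)) ∧
      loopGeDag σ ε m (n : ℤ) ≤ Submodule.map (LinearMap.snd ℂ _ _) W ∧
      Submodule.map (LinearMap.snd ℂ _ _) W ≤ loopGeDag σ ε m (-(n : ℤ))) := by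
  classical
  have hm' : (1 : ℤ) ≤ (m : ℤ) := by exact_mod_cast hm
  -- subalgebra facts
  have h1 : ∀ x ∈ Submodule.map (LinearMap.fst ℂ (LoopAlg g) (LoopAlg g)) W,
      ∀ y ∈ Submodule.map (LinearMap.fst ℂ (LoopAlg g) (LoopAlg g)) W,
      ⁅x, y⁆ ∈ Submodule.map (LinearMap.fst ℂ (LoopAlg g) (LoopAlg g)) W := by
    rintro x ⟨a, ha, rfl⟩ y ⟨b, hb, rfl⟩
    exact ⟨_, hWlie a ha b hb, rfl⟩
  have h2 : ∀ x ∈ Submodule.map (LinearMap.snd ℂ (LoopAlg g) (LoopAlg g)) W,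
      ∀ y ∈ Submodule.map (LinearMap.snd ℂ (LoopAlg g) (LoopAlg g)) W,
      ⁅x, y⁆ ∈ Submodule.map (LinearMap.snd ℂ (LoopAlg g) (LoopAlg g)) W := by
    rintro x ⟨a, ha, rfl⟩ y ⟨b, hb, rfl⟩
    exact ⟨_, hWlie a ha b hb, rfl⟩
  -- coisotropy
  have h5 : (loopCarrier σ ε ⊓ (loopForm g).orthogonal
      (Submodule.map (LinearMap.fst ℂ (LoopAlg g) (LoopAlg g)) W)).prod ⊥ ≤ W := by
    rintro ⟨x, x2⟩ hv
    rw [Submodule.mem_prod] at hv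
    obtain ⟨hx1, hx2⟩ := hv
    rw [Submodule.mem_inf] at hx1
    have hx2' : x2 = 0 := hx2
    subst hx2'
    refine hWcoiso (x, 0) (Submodule.mem_prod.mpr ⟨hx1.1, Submodule.zero_mem _⟩) ?_
    intro y hy
    have horth : loopForm g x y.1 = 0 := by
      have := hx1.2 y.1 ⟨y, hy, rfl⟩
      exact (loopForm_comm _ _).trans this
    show prodForm g (x, 0) y = 0
    simp [prodForm, LinearMap.compl₁₂_apply, horth]
  have h6 : Submodule.prod ⊥ (loopDagCarrier σ ε ⊓ (loopForm g).orthogonal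
      (Submodule.map (LinearMap.snd ℂ (LoopAlg g) (LoopAlg g)) W)) ≤ W := by
    rintro ⟨x1, x⟩ hv
    rw [Submodule.mem_prod] at hv
    obtain ⟨hx2, hx1⟩ := hv
    rw [Submodule.mem_inf] at hx1
    have hx2' : x1 = 0 := hx2
    subst hx2'
    refine hWcoiso (0, x) (Submodule.mem_prod.mpr ⟨Submodule.zero_mem _, hx1.1⟩) ?_
    intro y hy
    have horth : loopForm g x y.2 = 0 := by
      have := hx1.2 y.2 ⟨y, hy, rfl⟩
      exact (loopForm_comm _ _).trans this
    show prodForm g (0, x) y = 0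
    simp [prodForm, LinearMap.compl₁₂_apply, horth]
  have h3 : loopCarrier σ ε ⊓ (loopForm g).orthogonal
      (Submodule.map (LinearMap.fst ℂ (LoopAlg g) (LoopAlg g)) W)
      ≤ Submodule.map (LinearMap.fst ℂ (LoopAlg g) (LoopAlg g)) W := by
    intro x hx
    exact ⟨(x, 0), h5 (Submodule.mem_prod.mpr ⟨hx, Submodule.zero_mem _⟩), rfl⟩
  have h4 : loopDagCarrier σ ε ⊓ (loopForm g).orthogonal
      (Submodule.map (LinearMap.snd ℂ (LoopAlg g) (LoopAlg g)) W)
      ≤ Submodule.map (LinearMap.snd ℂ (LoopAlg g) (LoopAlg g)) W := by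
    intro x hx
    exact ⟨(0, x), h6 (Submodule.mem_prod.mpr ⟨Submodule.zero_mem _, hx⟩), rfl⟩
  refine ⟨h1, h2, h3, h4, h5, h6, ?_⟩
  -- boundedness
  have hgp : gp ≤ eigSp σ ε 0 := by rw [← hdec]; exact le_sup_left.trans le_sup_left
  have hhC : hC ≤ eigSp σ ε 0 := by rw [← hdec]; exact le_sup_right.trans le_sup_left
  have hgm : gm ≤ eigSp σ ε 0 := by rw [← hdec]; exact le_sup_right
  have h00 : eigSp σ ε (-0 : ℤ) = eigSp σ ε 0 := by norm_num
  have hhCd : hC ≤ eigSp σ ε (-0 : ℤ) := h00 ▸ hhC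
  have hgmd : gm ≤ eigSp σ ε (-0 : ℤ) := h00 ▸ hgm
  have hPp : (Submodule.map (TensorProduct.mk ℂ (LaurentPolynomial ℂ) g (T 0)) gp ⊔
      (⨆ j : ℤ, ⨆ _ : 1 ≤ j, loopComp σ ε j)) ≤ gradedGe (fun j => eigSp σ ε j) 0 := by
    refine sup_le ?_ ?_
    · exact (Submodule.map_mono hgp).trans
        (map_le_gradedGe (fun j => eigSp σ ε j) (c := 0) (j := 0) le_rfl)
    · show gradedGe (fun j => eigSp σ ε j) 1 ≤ gradedGe (fun j => eigSp σ ε j) 0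
      exact gradedGe_mono _ (by norm_num)
  have hPm : (Submodule.map (TensorProduct.mk ℂ (LaurentPolynomial ℂ) g (T 0)) gm ⊔
      (⨆ j : ℤ, ⨆ _ : 1 ≤ j, loopCompDag σ ε j)) ≤ gradedGe (fun j => eigSp σ ε (-j)) 0 := by
    refine sup_le ?_ ?_
    · exact (Submodule.map_mono hgmd).trans
        (map_le_gradedGe (fun j => eigSp σ ε (-j)) (c := 0) (j := 0) le_rfl)
    · show gradedGe (fun j => eigSp σ ε (-j)) 1 ≤ gradedGe (fun j => eigSp σ ε (-j)) 0
      exact gradedGe_mono _ (by norm_num)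
  have hCfst : Submodule.map (LinearMap.fst ℂ (LoopAlg g) (LoopAlg g))
      (Submodule.map (LinearMap.prod (TensorProduct.mk ℂ (LaurentPolynomial ℂ) g (T 0))
        (-(TensorProduct.mk ℂ (LaurentPolynomial ℂ) g (T 0)))) hC)
      ≤ gradedGe (fun j => eigSp σ ε j) 0 := by
    rintro x ⟨y, ⟨h, hh, rfl⟩, rfl⟩
    exact map_le_gradedGe (fun j => eigSp σ ε j) (c := 0) (j := 0) le_rfl ⟨h, hhC hh, rfl⟩
  have hCsnd : Submodule.map (LinearMap.snd ℂ (LoopAlg g) (LoopAlg g))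
      (Submodule.map (LinearMap.prod (TensorProduct.mk ℂ (LaurentPolynomial ℂ) g (T 0))
        (-(TensorProduct.mk ℂ (LaurentPolynomial ℂ) g (T 0)))) hC)
      ≤ gradedGe (fun j => eigSp σ ε (-j)) 0 := by
    rintro x ⟨y, ⟨h, hh, rfl⟩, rfl⟩
    refine map_le_gradedGe (fun j => eigSp σ ε (-j)) (c := 0) (j := 0) le_rfl ⟨-h, neg_mem (hhCd hh), ?_⟩
    simp [map_neg]
  have hstd_fst : Submodule.map (LinearMap.fst ℂ (LoopAlg g) (LoopAlg g)) (stdW σ ε gp hC gm)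
      ≤ gradedGe (fun j => eigSp σ ε j) 0 := by
    rw [stdW, Submodule.map_sup, Submodule.map_sup]
    refine sup_le (sup_le ?_ ?_) hCfst
    · rintro x ⟨⟨a, b⟩, hab, rfl⟩
      exact hPp (Submodule.mem_prod.mp hab).1
    · rintro x ⟨⟨a, b⟩, hab, rfl⟩
      have : a = 0 := (Submodule.mem_prod.mp hab).1
      simp only [LinearMap.fst_apply, this]
      exact Submodule.zero_mem _
  have hstd_snd : Submodule.map (LinearMap.snd ℂ (LoopAlg g) (LoopAlg g)) (stdW σ ε gp hC gm)
      ≤ gradedGe (fun j => eigSp σ ε (-j)) 0 := by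
    rw [stdW, Submodule.map_sup, Submodule.map_sup]
    refine sup_le (sup_le ?_ ?_) hCsnd
    · rintro x ⟨⟨a, b⟩, hab, rfl⟩
      have : b = 0 := (Submodule.mem_prod.mp hab).2
      simp only [LinearMap.snd_apply, this]
      exact Submodule.zero_mem _
    · rintro x ⟨⟨a, b⟩, hab, rfl⟩
      exact hPm (Submodule.mem_prod.mp hab).2
  have hstd_prod : stdW σ ε gp hC gm ≤ (loopCarrier σ ε).prod (loopDagCarrier σ ε) := by
    rw [stdW]
    refine sup_le (sup_le ?_ ?_) ?_
    · exact Submodule.prod_mono (hPp.trans (gradedGe_le_gradedSup _ 0)) bot_le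
    · exact Submodule.prod_mono bot_le (hPm.trans (gradedGe_le_gradedSup _ 0))
    · rintro v ⟨h, hh, rfl⟩
      refine Submodule.mem_prod.mpr ⟨?_, ?_⟩
      · exact (gradedGe_le_gradedSup (fun j => eigSp σ ε j) 0)
          (map_le_gradedGe (fun j => eigSp σ ε j) (c := 0) (j := 0) le_rfl ⟨h, hhC hh, rfl⟩)
      · refine (gradedGe_le_gradedSup (fun j => eigSp σ ε (-j)) 0)
          (map_le_gradedGe (fun j => eigSp σ ε (-j)) (c := 0) (j := 0) le_rfl
            ⟨-h, neg_mem (hhCd hh), ?_⟩)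
        simp [map_neg]
  -- commensurability gives the upper bounds
  obtain ⟨t, htmem, hWle⟩ := le_sup_span_of_commens hcomm
  have htprod : ∀ v ∈ t, v ∈ (loopCarrier σ ε).prod (loopDagCarrier σ ε) :=
    fun v hv => (sup_le hWsub hstd_prod) (htmem v hv)
  obtain ⟨N₁, hN₁⟩ := finset_bound (fun j => eigSp σ ε j) (t.image Prod.fst) (by
    rintro v hv
    simp only [Finset.mem_image] at hv
    obtain ⟨w, hw, rfl⟩ := hv
    exact (Submodule.mem_prod.mp (htprod w hw)).1)
  obtain ⟨N₂, hN₂⟩ := finset_bound (fun j => eigSp σ ε (-j)) (t.image Prod.snd) (by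
    rintro v hv
    simp only [Finset.mem_image] at hv
    obtain ⟨w, hw, rfl⟩ := hv
    exact (Submodule.mem_prod.mp (htprod w hw)).2)
  set N : ℕ := max N₁ N₂ with hN
  have hWfst : Submodule.map (LinearMap.fst ℂ (LoopAlg g) (LoopAlg g)) W
      ≤ gradedGe (fun j => eigSp σ ε j) (-(N : ℤ)) := by
    refine (Submodule.map_mono hWle).trans ?_
    rw [Submodule.map_sup]
    refine sup_le (hstd_fst.trans (gradedGe_mono _ (by omega))) ?_
    rw [Submodule.map_span]
    refine Submodule.span_le.mpr ?_
    rintro x ⟨w, hw, rfl⟩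
    exact gradedGe_mono _ (by omega) (hN₁ _ (Finset.mem_image_of_mem Prod.fst hw))
  have hWsnd : Submodule.map (LinearMap.snd ℂ (LoopAlg g) (LoopAlg g)) W
      ≤ gradedGe (fun j => eigSp σ ε (-j)) (-(N : ℤ)) := by
    refine (Submodule.map_mono hWle).trans ?_
    rw [Submodule.map_sup]
    refine sup_le (hstd_snd.trans (gradedGe_mono _ (by omega))) ?_
    rw [Submodule.map_span]
    refine Submodule.span_le.mpr ?_
    rintro x ⟨w, hw, rfl⟩
    exact gradedGe_mono _ (by omega) (hN₂ _ (Finset.mem_image_of_mem Prod.snd hw))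
  refine ⟨N + 1, ?_, ?_, ?_, ?_⟩
  · -- loopGe (N+1) ≤ W₊
    rw [loopGe_eq]
    refine le_trans ?_ h3
    intro x hx
    refine Submodule.mem_inf.mpr ⟨?_, ?_⟩
    · exact (loopCarrier_eq σ ε) ▸ gradedGe_le_gradedSup _ _ hx
    · rw [LinearMap.BilinForm.mem_orthogonal_iff]
      rintro w hw
      refine (graded_ortho (fun j => eigSp σ ε j) (fun j => eigSp σ ε j)
        (a := -(N : ℤ)) (b := ((N + 1 : ℕ) : ℤ) * m) ?_ (hWfst hw) hx)
      push_cast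
      nlinarith [hm']
  · -- W₊ ≤ loopGe (-(N+1))
    rw [loopGe_eq]
    refine hWfst.trans (gradedGe_mono _ ?_)
    push_cast
    nlinarith [hm']
  · -- loopGeDag (N+1) ≤ W₋
    rw [loopGeDag_eq]
    refine le_trans ?_ h4
    intro x hx
    refine Submodule.mem_inf.mpr ⟨?_, ?_⟩
    · exact (loopDagCarrier_eq σ ε) ▸ gradedGe_le_gradedSup _ _ hx
    · rw [LinearMap.BilinForm.mem_orthogonal_iff]
      rintro w hw
      refine (graded_ortho (fun j => eigSp σ ε (-j)) (fun j => eigSp σ ε (-j))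
        (a := -(N : ℤ)) (b := ((N + 1 : ℕ) : ℤ) * m) ?_ (hWsnd hw) hx)
      push_cast
      nlinarith [hm']
  · -- W₋ ≤ loopGeDag (-(N+1))
    rw [loopGeDag_eq]
    refine hWsnd.trans (gradedGe_mono _ ?_)
    push_cast
    nlinarith [hm']
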